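/- Let U be a unitary on ℂ^m ⊗ ℂ^n with operator Schmidt coefficients s_i (singular values of its coefficient matrix in the product matrix-unit basis). Then the Schmidt strength K_Sch(U) = -∑_i (s_i²/(mn)) log(s_i²/(mn)) is zero if and only if U is a product u₁ ⊗ u₂ of unitaries (up to phase), i.e., if and only if U has exactly one nonzero Schmidt coefficient. -/

import Mathlib

open Matrix Kronecker
open scoped ComplexOrder


section Helpers

/-- Entropy of a probability vector vanishes iff exactly one entry is nonzero. -/
lemma entropy_zero_iff_uniqueNonzero {ι : Type*} [Fintype ι] [DecidableEq ι] (p : ι → ℝ)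
    (h0 : ∀ i, 0 ≤ p i) (hsum : ∑ i, p i = 1) :
    (∑ i, Real.negMulLog (p i)) = 0 ↔ ∃! i, p i ≠ 0 := by
  have hle : ∀ i, p i ≤ 1 := by
    intro i
    calc p i ≤ ∑ j, p j := Finset.single_le_sum (fun j _ => h0 j) (Finset.mem_univ i)
    _ = 1 := hsum
  have hnn : ∀ i ∈ Finset.univ, (0:ℝ) ≤ Real.negMulLog (p i) :=
    fun i _ => Real.negMulLog_nonneg (h0 i) (hle i)
  rw [Finset.sum_eq_zero_iff_of_nonneg hnn]
  constructor
  · intro h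
    have hval : ∀ i, p i = 0 ∨ p i = 1 := by
      intro i
      have h1 : -(p i) * Real.log (p i) = 0 := h i (Finset.mem_univ i)
      have h2 : p i * Real.log (p i) = 0 := by linarith [h1]
      rcases mul_eq_zero.mp h2 with h3 | h3
      · exact Or.inl h3
      · rcases Real.log_eq_zero.mp h3 with h4 | h4 | h4
        · exact Or.inl h4
        · exact Or.inr h4
        · exact absurd (h4 ▸ h0 i) (by norm_num)
    have hex : ∃ i, p i = 1 := by
      by_contra hno
      push_neg at hno
      have hz : ∀ i, p i = 0 := fun i => (hval i).resolve_right (hno i)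
      rw [Finset.sum_eq_zero (fun i _ => hz i)] at hsum
      norm_num at hsum
    obtain ⟨i₀, hi₀⟩ := hex
    refine ⟨i₀, show p i₀ ≠ 0 by rw [hi₀]; exact one_ne_zero, ?_⟩
    intro j hj
    by_contra hne
    have hj1 : p j = 1 := (hval j).resolve_left hj
    have hsub : ({j, i₀} : Finset ι) ⊆ Finset.univ := Finset.subset_univ _
    have hpair := Finset.sum_le_sum_of_subset_of_nonneg hsub (fun k _ _ => h0 k)
    rw [Finset.sum_pair hne, hi₀, hj1, hsum] at hpair
    linarith
  · rintro ⟨i₀, hi₀, huniq⟩ i _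
    have hzero : ∀ j, j ≠ i₀ → p j = 0 := fun j hj => by
      by_contra h'; exact hj (huniq j h')
    have hone : p i₀ = 1 := by
      rw [← hsum]
      exact (Finset.sum_eq_single i₀ (fun j _ hj => hzero j hj)
        (fun h => absurd (Finset.mem_univ i₀) h)).symm
    by_cases hi : i = i₀
    · rw [hi, hone]; simp [Real.negMulLog]
    · rw [hzero i hi]; simp

lemma conjTranspose_kronecker {l m n p : Type*} (A : Matrix l m ℂ) (B : Matrix n p ℂ) :
    (A ⊗ₖ B)ᴴ = Aᴴ ⊗ₖ Bᴴ := by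
  ext ⟨i1, i2⟩ ⟨j1, j2⟩
  simp [Matrix.conjTranspose_apply, mul_comm]

/-- If the Gram matrix `Cᴴ C` has at most one nonzero eigenvalue, then `C` is
an outer product of two vectors. -/
lemma rankOne_decomp {I J : Type*} [Fintype I] [Fintype J] [DecidableEq J]
    (C : Matrix I J ℂ)
    (h : ∃! j, ((Matrix.posSemidef_conjTranspose_mul_self C).isHermitian).eigenvalues j ≠ 0) :
    ∃ x y, C = Matrix.vecMulVec x y := by
  set hH := (Matrix.posSemidef_conjTranspose_mul_self C).isHermitian with hHdef
  obtain ⟨j₀, -, huniq⟩ := h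
  have hzero : ∀ j, j ≠ j₀ → hH.eigenvalues j = 0 := fun j hj => by
    by_contra h'; exact hj (huniq j h')
  set lam : ℝ := hH.eigenvalues j₀ with hlam
  set W : Matrix J J ℂ := (hH.eigenvectorUnitary : Matrix J J ℂ) with hWdef
  set w : J → ℂ := fun j => W j j₀ with hwdef
  -- the Gram matrix is `lam • w wᴴ`
  have hG : Cᴴ * C = (lam : ℂ) • Matrix.vecMulVec w (star w) := by
    conv_lhs => rw [hH.spectral_theorem, Unitary.conjStarAlgAut_apply]
    ext a b
    rw [Matrix.mul_apply, Finset.sum_eq_single j₀]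
    · rw [Matrix.mul_diagonal]
      simp only [Matrix.smul_apply, Matrix.vecMulVec_apply, Pi.star_apply, Matrix.star_apply,
        Function.comp_apply, smul_eq_mul, hwdef, hlam, RCLike.ofReal_alg,
        Complex.coe_algebraMap, Complex.real_smul]
      ring
    · intro k _ hk
      rw [Matrix.mul_diagonal]
      simp [hzero k hk]
    · intro h'
      exact absurd (Finset.mem_univ j₀) h'
  -- w is a unit vector
  have hWu : star W * W = 1 := Matrix.mem_unitaryGroup_iff'.mp hH.eigenvectorUnitary.2
  have hw1 : ∑ k, star (w k) * w k = 1 := by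
    have h1 : (star W * W) j₀ j₀ = (1 : Matrix J J ℂ) j₀ j₀ := by rw [hWu]
    rw [Matrix.mul_apply, Matrix.one_apply_eq] at h1
    simpa [Matrix.star_apply] using h1
  set Q : Matrix J J ℂ := Matrix.vecMulVec w (star w) with hQdef
  have hQQ : Q * Q = Q := by
    ext a b
    rw [Matrix.mul_apply]
    have hterm : ∀ k, Q a k * Q k b = (w a * star (w b)) * (star (w k) * w k) := by
      intro k
      simp only [hQdef, Matrix.vecMulVec_apply, Pi.star_apply]
      ring
    rw [Finset.sum_congr rfl (fun k _ => hterm k), ← Finset.mul_sum, hw1, mul_one]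
    simp [hQdef, Matrix.vecMulVec_apply]
  have hQH : Qᴴ = Q := by
    ext a b
    simp only [hQdef, Matrix.conjTranspose_apply, Matrix.vecMulVec_apply, Pi.star_apply,
      star_mul', star_star]
    ring
  have hGQ : (Cᴴ * C) * Q = Cᴴ * C := by
    rw [hG, Matrix.smul_mul, hQQ]
  have hQG : Q * (Cᴴ * C) = Cᴴ * C := by
    rw [hG, Matrix.mul_smul, hQQ]
  -- C(1 - Q) has zero Gram matrix
  have e1 : Cᴴ * (C * Q) = Cᴴ * C := by rw [← Matrix.mul_assoc, hGQ]
  have e2 : (Q * Cᴴ) * C = Cᴴ * C := by rw [Matrix.mul_assoc, hQG]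
  have e3 : (Q * Cᴴ) * (C * Q) = Cᴴ * C := by
    rw [Matrix.mul_assoc, e1, hQG]
  have key : (C - C * Q)ᴴ * (C - C * Q) = 0 := by
    calc (C - C * Q)ᴴ * (C - C * Q)
        = (Cᴴ - Q * Cᴴ) * (C - C * Q) := by
          rw [Matrix.conjTranspose_sub, Matrix.conjTranspose_mul, hQH]
      _ = Cᴴ * C - Cᴴ * (C * Q) - ((Q * Cᴴ) * C - (Q * Cᴴ) * (C * Q)) := by
          rw [Matrix.sub_mul, Matrix.mul_sub, Matrix.mul_sub]
      _ = 0 := by rw [e1, e2, e3]; simp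
  have hCQ : C = C * Q := sub_eq_zero.mp (Matrix.conjTranspose_mul_self_eq_zero.mp key)
  refine ⟨C *ᵥ w, star w, ?_⟩
  ext a b
  have hrhs : Matrix.vecMulVec (C *ᵥ w) (star w) a b = ∑ k, C a k * w k * star (w b) := by
    rw [Matrix.vecMulVec_apply]
    simp only [Matrix.mulVec, dotProduct, Pi.star_apply]
    rw [Finset.sum_mul]
  conv_lhs => rw [hCQ]
  rw [Matrix.mul_apply, hrhs]
  exact Finset.sum_congr rfl fun k _ => by
    simp only [hQdef, Matrix.vecMulVec_apply, Pi.star_apply, mul_assoc]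

end Helpers

/-- The Schmidt strength `K_Sch(U)` of a unitary `U` on `ℂ^m ⊗ ℂ^n` (the Shannon entropy
of the distribution `{sᵢ²/(mn)}` of squared operator Schmidt coefficients) vanishes if
and only if `U` is a tensor product of unitaries, if and only if `U` has exactly one
nonzero Schmidt coefficient. -/
theorem schmidt_strength_zero_iff_local (m n : ℕ) (hm : 0 < m) (hn : 0 < n)
    (U : Matrix (Fin m × Fin n) (Fin m × Fin n) ℂ)
    (hU : U ∈ Matrix.unitaryGroup (Fin m × Fin n) ℂ) :
    let C : Matrix (Fin m × Fin m) (Fin n × Fin n) ℂ :=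
      Matrix.of fun ab cd => U (ab.1, cd.1) (ab.2, cd.2)
    let sSq : Fin n × Fin n → ℝ :=
      ((Matrix.posSemidef_conjTranspose_mul_self C).isHermitian).eigenvalues
    let KSch : ℝ := ∑ i, Real.negMulLog (sSq i / (m * n))
    (KSch = 0 ↔
      ∃ u₁ ∈ Matrix.unitaryGroup (Fin m) ℂ, ∃ u₂ ∈ Matrix.unitaryGroup (Fin n) ℂ,
        U = u₁ ⊗ₖ u₂) ∧
    (KSch = 0 ↔ ∃! i, sSq i ≠ 0) := by
  intro C sSq KSch
  have hmn : (0:ℝ) < (m:ℝ) * n :=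
    mul_pos (by exact_mod_cast hm) (by exact_mod_cast hn)
  set hH := (Matrix.posSemidef_conjTranspose_mul_self C).isHermitian with hHdef
  -- trace of the Gram matrix equals m*n
  have hUU : Uᴴ * U = 1 := Matrix.mem_unitaryGroup_iff'.mp hU
  have htr : Matrix.trace (Cᴴ * C) = ((m : ℂ) * n) := by
    have h1 : Matrix.trace (Cᴴ * C) =
        ∑ j : Fin n × Fin n, ∑ i : Fin m × Fin m, star (C i j) * C i j := by
      simp [Matrix.trace, Matrix.diag, Matrix.mul_apply, Matrix.conjTranspose_apply]
    have h2 : Matrix.trace (Uᴴ * U) =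
        ∑ j : Fin m × Fin n, ∑ i : Fin m × Fin n, star (U i j) * U i j := by
      simp [Matrix.trace, Matrix.diag, Matrix.mul_apply, Matrix.conjTranspose_apply]
    have h3 : ∑ j : Fin n × Fin n, ∑ i : Fin m × Fin m, star (C i j) * C i j
        = ∑ j : Fin m × Fin n, ∑ i : Fin m × Fin n, star (U i j) * U i j := by
      have l1 := (Fintype.sum_prod_type
        (f := fun x : (Fin n × Fin n) × (Fin m × Fin m) => star (C x.2 x.1) * C x.2 x.1)).symm
      have l2 := Fintype.sum_prod_type
        (f := fun x : (Fin m × Fin n) × (Fin m × Fin n) => star (U x.2 x.1) * U x.2 x.1)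
      rw [l1, ← l2]
      exact Fintype.sum_equiv
        (⟨fun x => ((x.2.2, x.1.2), (x.2.1, x.1.1)),
          fun y => ((y.2.2, y.1.2), (y.2.1, y.1.1)),
          fun _ => rfl, fun _ => rfl⟩ :
          ((Fin n × Fin n) × (Fin m × Fin m)) ≃ ((Fin m × Fin n) × (Fin m × Fin n)))
        _ _ (fun x => rfl)
    rw [h1, h3, ← h2, hUU, Matrix.trace_one]
    simp [Fintype.card_prod]
  have hWu : star (hH.eigenvectorUnitary : Matrix (Fin n × Fin n) (Fin n × Fin n) ℂ)
      * (hH.eigenvectorUnitary : Matrix (Fin n × Fin n) (Fin n × Fin n) ℂ) = 1 :=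
    Matrix.mem_unitaryGroup_iff'.mp hH.eigenvectorUnitary.2
  have htr2 : Matrix.trace (Cᴴ * C) = ∑ j, ((sSq j : ℝ) : ℂ) := by
    conv_lhs => rw [hH.spectral_theorem, Unitary.conjStarAlgAut_apply]
    rw [Matrix.trace_mul_cycle, hWu, Matrix.one_mul, Matrix.trace_diagonal]
    exact Finset.sum_congr rfl fun j _ => rfl
  have hsum : ∑ j, sSq j = (m:ℝ) * n := by
    have h := htr2.symm.trans htr
    rw [← Complex.ofReal_sum] at h
    exact_mod_cast h
  have hnn : ∀ j, 0 ≤ sSq j :=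
    fun j => (Matrix.posSemidef_conjTranspose_mul_self C).eigenvalues_nonneg j
  -- the entropy characterization
  have hEnt : KSch = 0 ↔ ∃! i, sSq i ≠ 0 := by
    have hp0 : ∀ i, 0 ≤ sSq i / ((m:ℝ) * n) := fun i => div_nonneg (hnn i) hmn.le
    have hp1 : ∑ i, sSq i / ((m:ℝ) * n) = 1 := by
      rw [← Finset.sum_div, hsum, div_self hmn.ne']
    have h := entropy_zero_iff_uniqueNonzero _ hp0 hp1
    refine Iff.trans ?_ (h.trans ?_)
    · exact Iff.rfl
    · exact existsUnique_congr fun i => not_congr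
        (div_eq_zero_iff.trans (or_iff_left hmn.ne'))
  -- the product characterization
  have hProd : (∃! i, sSq i ≠ 0) ↔
      ∃ u₁ ∈ Matrix.unitaryGroup (Fin m) ℂ, ∃ u₂ ∈ Matrix.unitaryGroup (Fin n) ℂ,
        U = u₁ ⊗ₖ u₂ := by
    constructor
    · intro h
      obtain ⟨x, y, hCxy⟩ := rankOne_decomp C h
      set A : Matrix (Fin m) (Fin m) ℂ := Matrix.of fun a b => x (a, b) with hAdef
      set B : Matrix (Fin n) (Fin n) ℂ := Matrix.of fun c d => y (c, d) with hBdef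
      have hUAB : U = A ⊗ₖ B := by
        ext ⟨a, c⟩ ⟨b, d⟩
        have : C (a, b) (c, d) = x (a, b) * y (c, d) := by
          rw [hCxy]; rfl
        exact this
      have hPQ : (Aᴴ * A) ⊗ₖ (Bᴴ * B) = 1 := by
        rw [Matrix.mul_kronecker_mul, ← _root_.conjTranspose_kronecker, ← hUAB, hUU]
      set P := Aᴴ * A with hPdef
      set Qm := Bᴴ * B with hQmdef
      have hentry : ∀ (i j : Fin m) (k l : Fin n),
          P i j * Qm k l = if i = j ∧ k = l then 1 else 0 := by
        intro i j k l
        have h' : (P ⊗ₖ Qm) (i, k) (j, l) = (1 : Matrix (Fin m × Fin n) (Fin m × Fin n) ℂ) (i, k) (j, l) := by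
          rw [hPQ]
        rw [Matrix.kroneckerMap_apply, Matrix.one_apply] at h'
        simpa [Prod.ext_iff] using h'
      set i₀ : Fin m := ⟨0, hm⟩
      set k₀ : Fin n := ⟨0, hn⟩
      set r : ℝ := ∑ j, Complex.normSq (B j k₀) with hrdef
      have hQkk : Qm k₀ k₀ = (r : ℂ) := by
        rw [hQmdef, Matrix.mul_apply]
        rw [hrdef]
        push_cast
        exact Finset.sum_congr rfl fun j _ => by
          rw [Matrix.conjTranspose_apply, Complex.normSq_eq_conj_mul_self]
          rfl
      have hq1 : P i₀ i₀ * Qm k₀ k₀ = 1 := by simpa using hentry i₀ i₀ k₀ k₀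
      have hrne : (r : ℂ) ≠ 0 := by
        intro h0
        rw [hQkk, h0, mul_zero] at hq1
        exact zero_ne_one hq1
      have hrpos : 0 < r := by
        rcases lt_or_eq_of_le (Finset.sum_nonneg fun j _ => Complex.normSq_nonneg _ : 0 ≤ r) with h | h
        · exact h
        · exact absurd (by exact_mod_cast h.symm : (r:ℂ) = 0) hrne
      have hq1' : P i₀ i₀ * (r : ℂ) = 1 := by rw [← hQkk]; exact hq1
      have hPii : P i₀ i₀ = (r : ℂ)⁻¹ := eq_inv_of_mul_eq_one_left hq1'
      have hPmat : P = ((r : ℂ))⁻¹ • (1 : Matrix (Fin m) (Fin m) ℂ) := by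
        ext i j
        have h' := hentry i j k₀ k₀
        rw [hQkk] at h'
        by_cases hij : i = j
        · subst hij
          rw [if_pos ⟨rfl, rfl⟩] at h'
          rw [Matrix.smul_apply, Matrix.one_apply_eq, smul_eq_mul, mul_one]
          exact eq_inv_of_mul_eq_one_left h'
        · rw [if_neg (fun hc => hij hc.1)] at h'
          rw [Matrix.smul_apply, Matrix.one_apply_ne hij, smul_eq_mul, mul_zero]
          exact (mul_eq_zero.mp h').resolve_right hrne
      have hQmat : Qm = (r : ℂ) • (1 : Matrix (Fin n) (Fin n) ℂ) := by
        ext k l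
        have h' := hentry i₀ i₀ k l
        rw [hPii] at h'
        by_cases hkl : k = l
        · subst hkl
          rw [if_pos ⟨rfl, rfl⟩] at h'
          rw [Matrix.smul_apply, Matrix.one_apply_eq, smul_eq_mul, mul_one]
          have := eq_inv_of_mul_eq_one_right h'
          rw [inv_inv] at this
          exact this
        · rw [if_neg (fun hc => hkl hc.2)] at h'
          rw [Matrix.smul_apply, Matrix.one_apply_ne hkl, smul_eq_mul, mul_zero]
          have : (r:ℂ)⁻¹ ≠ 0 := inv_ne_zero hrne
          exact (mul_eq_zero.mp h').resolve_left this
      set s : ℝ := Real.sqrt r with hsdef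
      have hs2 : (s:ℝ) ^ 2 = r := Real.sq_sqrt hrpos.le
      have hspos : 0 < s := Real.sqrt_pos.mpr hrpos
      have hsne : ((s:ℝ) : ℂ) ≠ 0 := by exact_mod_cast hspos.ne'
      refine ⟨((s:ℝ):ℂ) • A, ?_, ((s:ℝ):ℂ)⁻¹ • B, ?_, ?_⟩
      · apply Matrix.mem_unitaryGroup_iff'.mpr
        have : star (((s:ℝ):ℂ) • A) * (((s:ℝ):ℂ) • A)
            = (((s:ℝ):ℂ) * ((s:ℝ):ℂ)) • P := by
          rw [star_smul, Matrix.smul_mul, Matrix.mul_smul, smul_smul]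
          rw [Complex.star_def, Complex.conj_ofReal]
          rfl
        rw [this, hPmat, smul_smul]
        have hss : (((s:ℝ):ℂ) * ((s:ℝ):ℂ)) = (r:ℂ) := by
          rw [← Complex.ofReal_mul]
          norm_cast
          rw [← hs2]; ring
        rw [hss, mul_inv_cancel₀ hrne, one_smul]
      · apply Matrix.mem_unitaryGroup_iff'.mpr
        have : star (((s:ℝ):ℂ)⁻¹ • B) * (((s:ℝ):ℂ)⁻¹ • B)
            = (((s:ℝ):ℂ)⁻¹ * ((s:ℝ):ℂ)⁻¹) • Qm := by
          rw [star_smul, Matrix.smul_mul, Matrix.mul_smul, smul_smul]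
          rw [star_inv₀, Complex.star_def, Complex.conj_ofReal]
          rfl
        rw [this, hQmat, smul_smul]
        have hss : (((s:ℝ):ℂ)⁻¹ * ((s:ℝ):ℂ)⁻¹ * (r:ℂ)) = 1 := by
          have hr : (r:ℂ) = ((s:ℝ):ℂ) * ((s:ℝ):ℂ) := by
            rw [← Complex.ofReal_mul]
            norm_cast
            rw [← hs2]; ring
          rw [hr]
          field_simp
        rw [hss, one_smul]
      · rw [hUAB, Matrix.smul_kronecker, Matrix.kronecker_smul, smul_smul,
          mul_inv_cancel₀ hsne, one_smul]
    · rintro ⟨u₁, hu₁, u₂, hu₂, hUprod⟩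
      -- C is a rank-one matrix
      set x : Fin m × Fin m → ℂ := fun ab => u₁ ab.1 ab.2 with hxdef
      set y : Fin n × Fin n → ℂ := fun cd => u₂ cd.1 cd.2 with hydef
      have hCxy : C = Matrix.vecMulVec x y := by
        ext ⟨a, b⟩ ⟨c, d⟩
        show U (a, c) (b, d) = x (a, b) * y (c, d)
        rw [hUprod]
        rfl
      -- rank bound
      have hrank : (Cᴴ * C).rank ≤ 1 := by
        rw [Matrix.rank_conjTranspose_mul_self, hCxy, Matrix.vecMulVec_eq Unit]
        calc (Matrix.replicateCol Unit x * Matrix.replicateRow Unit y).rank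
            ≤ (Matrix.replicateRow Unit y).rank := Matrix.rank_mul_le_right _ _
          _ ≤ Fintype.card Unit := Matrix.rank_le_card_height _
          _ = 1 := by simp
      have hcard : Fintype.card {j // hH.eigenvalues j ≠ 0} ≤ 1 := by
        rw [← hH.rank_eq_card_non_zero_eigs]
        exact hrank
      have hex : ∃ j, sSq j ≠ 0 := by
        by_contra hno
        push_neg at hno
        rw [Finset.sum_eq_zero (fun j _ => hno j)] at hsum
        exact absurd hsum.symm hmn.ne'
      obtain ⟨j₀, hj₀⟩ := hex
      refine ⟨j₀, hj₀, fun j hj => ?_⟩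
      have := Fintype.card_le_one_iff.mp hcard ⟨j, hj⟩ ⟨j₀, hj₀⟩
      exact congrArg Subtype.val this
  exact ⟨hEnt.trans hProd, hEnt⟩
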